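/- For every pair (f, g) of tropical rational functions in n variables, the congruence variety V((f,g)) = { x ∈ ℝ^n | f(x) = g(x) } is a finite union of ℝ-rational polyhedral sets. -/
import Mathlib

def IsTropPoly (n : ℕ) (f : (Fin n → ℝ) → ℝ) : Prop :=
  ∃ (A : Finset (Fin n → ℕ)) (hA : A.Nonempty) (a : (Fin n → ℕ) → ℝ),
    ∀ x, f x = A.sup' hA fun i => a i + ∑ j, (i j : ℝ) * x j

def IsTropRat (n : ℕ) (f : (Fin n → ℝ) → ℝ) : Prop :=
  ∃ f₁ f₂, IsTropPoly n f₁ ∧ IsTropPoly n f₂ ∧ ∀ x, f x = f₁ x - f₂ x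

def IsRatPolyhedral (n : ℕ) (P : Set (Fin n → ℝ)) : Prop :=
  ∃ (m : ℕ) (a : Fin m → Fin n → ℚ) (b : Fin m → ℝ),
    P = {x | ∀ i, (∑ j, (a i j : ℝ) * x j) + b i ≤ 0}

open Finset

lemma halfspace_poly (n : ℕ) (c : Fin n → ℚ) (d : ℝ) :
    IsRatPolyhedral n {x | (∑ j, (c j : ℝ) * x j) + d ≤ 0} :=
  ⟨1, fun _ => c, fun _ => d, by ext x; simp [Fin.forall_fin_one]⟩

lemma inter_poly {n : ℕ} {P Q : Set (Fin n → ℝ)} (hP : IsRatPolyhedral n P)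
    (hQ : IsRatPolyhedral n Q) : IsRatPolyhedral n (P ∩ Q) := by
  obtain ⟨m1, a1, b1, rfl⟩ := hP
  obtain ⟨m2, a2, b2, rfl⟩ := hQ
  refine ⟨m1 + m2, Fin.append a1 a2, Fin.append b1 b2, ?_⟩
  ext x
  constructor
  · rintro ⟨h1, h2⟩ i
    refine Fin.addCases (fun i => ?_) (fun i => ?_) i
    · simpa [Fin.append_left] using h1 i
    · simpa [Fin.append_right] using h2 i
  · intro h
    constructor
    · intro i; simpa [Fin.append_left] using h (Fin.castAdd m2 i)
    · intro i; simpa [Fin.append_right] using h (Fin.natAdd m1 i)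

lemma univ_poly (n : ℕ) : IsRatPolyhedral n Set.univ :=
  ⟨0, Fin.elim0, Fin.elim0, by ext x; simp⟩

lemma forall_poly {n : ℕ} {ι : Type*} [DecidableEq ι] (S : Finset ι) (Q : ι → Set (Fin n → ℝ))
    (h : ∀ i ∈ S, IsRatPolyhedral n (Q i)) :
    IsRatPolyhedral n {x | ∀ i ∈ S, x ∈ Q i} := by
  induction S using Finset.induction_on with
  | empty => simpa using univ_poly n
  | @insert a s hs ih =>
    have : {x : Fin n → ℝ | ∀ i ∈ insert a s, x ∈ Q i} = Q a ∩ {x | ∀ i ∈ s, x ∈ Q i} := by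
      ext x; simp [Set.mem_inter_iff]
    rw [this]
    exact inter_poly (h a (mem_insert_self a s)) (ih fun i hi => h i (mem_insert_of_mem hi))

lemma halfspace_le_poly {n : ℕ} (u s : Fin n → ℕ) (au as : ℝ) :
    IsRatPolyhedral n {x | au + ∑ j, (u j : ℝ) * x j ≤ as + ∑ j, (s j : ℝ) * x j} := by
  have := halfspace_poly n (fun j => (u j : ℚ) - s j) (au - as)
  convert this using 1
  ext x
  simp only [Set.mem_setOf_eq]
  push_cast
  rw [show ∀ p q : ℝ, (∑ j, ((u j : ℝ) - s j) * x j) = (∑ j, (u j : ℝ) * x j) - ∑ j, (s j:ℝ) * x j from fun _ _ => by rw [← Finset.sum_sub_distrib]; exact Finset.sum_congr rfl fun j _ => by ring]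
  constructor <;> intro <;> linarith
  · exact 0
  · exact 0

lemma main_lemma {n : ℕ} {ι κ : Type*} [DecidableEq ι] [DecidableEq κ]
    (A : Finset ι) (hA : A.Nonempty) (B : Finset κ) (hB : B.Nonempty)
    (c : ι → Fin n → ℕ) (d : ι → ℝ) (e : κ → Fin n → ℕ) (f : κ → ℝ) :
    ∃ (k : ℕ) (P : Fin k → Set (Fin n → ℝ)),
      (∀ i, IsRatPolyhedral n (P i)) ∧
      {x | (A.sup' hA fun i => d i + ∑ j, (c i j : ℝ) * x j)
         = (B.sup' hB fun i => f i + ∑ j, (e i j : ℝ) * x j)} = ⋃ i, P i := by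
  classical
  set FA : ι → (Fin n → ℝ) → ℝ := fun i x => d i + ∑ j, (c i j : ℝ) * x j with hFA
  set FB : κ → (Fin n → ℝ) → ℝ := fun i x => f i + ∑ j, (e i j : ℝ) * x j with hFB
  set Piece : ι → κ → Set (Fin n → ℝ) := fun s t =>
    {x | ∀ u ∈ A, x ∈ {y | FA u y ≤ FA s y}} ∩
    ({x | ∀ v ∈ B, x ∈ {y | FB v y ≤ FB t y}} ∩
     ({x | FA s x ≤ FB t x} ∩ {x | FB t x ≤ FA s x})) with hPiece
  have hpoly : ∀ s t, IsRatPolyhedral n (Piece s t) := by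
    intro s t
    refine inter_poly (forall_poly A _ fun u _ => halfspace_le_poly (c u) (c s) (d u) (d s))
      (inter_poly (forall_poly B _ fun v _ => halfspace_le_poly (e v) (e t) (f v) (f t))
        (inter_poly (halfspace_le_poly (c s) (e t) (d s) (f t))
          (halfspace_le_poly (e t) (c s) (f t) (d s))))
  let E := (A ×ˢ B).equivFin
  refine ⟨(A ×ˢ B).card, fun i => Piece (E.symm i).1.1 (E.symm i).1.2, fun i => hpoly _ _, ?_⟩
  ext x
  simp only [Set.mem_setOf_eq, Set.mem_iUnion]
  constructor
  · intro hx
    obtain ⟨s, hs, hseq⟩ := Finset.exists_mem_eq_sup' hA (fun i => FA i x)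
    obtain ⟨t, ht, hteq⟩ := Finset.exists_mem_eq_sup' hB (fun i => FB i x)
    refine ⟨E ⟨(s, t), Finset.mem_product.mpr ⟨hs, ht⟩⟩, ?_⟩
    rw [Equiv.symm_apply_apply]
    refine ⟨fun u hu => ?_, fun v hv => ?_, ?_, ?_⟩
    · show FA u x ≤ FA s x
      rw [← hseq]; exact Finset.le_sup' (fun i => FA i x) hu
    · show FB v x ≤ FB t x
      rw [← hteq]; exact Finset.le_sup' (fun i => FB i x) hv
    · show FA s x ≤ FB t x
      exact le_of_eq (by rw [← hseq, ← hteq]; exact hx)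
    · show FB t x ≤ FA s x
      exact le_of_eq (by rw [← hseq, ← hteq]; exact hx.symm)
  · rintro ⟨i, h1, h2, h3, h4⟩
    set s := (E.symm i).1.1 with hsdef
    set t := (E.symm i).1.2 with htdef
    obtain ⟨hs, ht⟩ := Finset.mem_product.mp (E.symm i).2
    have hAsup : (A.sup' hA fun i => FA i x) = FA s x :=
      le_antisymm (Finset.sup'_le _ _ fun u hu => h1 u hu) (Finset.le_sup' (fun i => FA i x) hs)
    have hBsup : (B.sup' hB fun i => FB i x) = FB t x :=
      le_antisymm (Finset.sup'_le _ _ fun v hv => h2 v hv) (Finset.le_sup' (fun i => FB i x) ht)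
    rw [hAsup, hBsup]
    exact le_antisymm h3 h4

lemma sup'_add_sup' {ι κ : Type*} (A : Finset ι) (hA : A.Nonempty) (B : Finset κ)
    (hB : B.Nonempty) (h : ι → ℝ) (k : κ → ℝ) :
    A.sup' hA h + B.sup' hB k
      = (A ×ˢ B).sup' (hA.product hB) (fun p => h p.1 + k p.2) := by
  apply le_antisymm
  · obtain ⟨s, hs, hseq⟩ := Finset.exists_mem_eq_sup' hA h
    obtain ⟨t, ht, hteq⟩ := Finset.exists_mem_eq_sup' hB k
    calc A.sup' hA h + B.sup' hB k = h s + k t := by rw [hseq, hteq]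
      _ ≤ _ := Finset.le_sup' (fun p : ι × κ => h p.1 + k p.2)
          (Finset.mem_product.mpr ⟨hs, ht⟩ : (s, t) ∈ A ×ˢ B)
  · refine Finset.sup'_le _ _ fun p hp => ?_
    obtain ⟨hp1, hp2⟩ := Finset.mem_product.mp hp
    exact add_le_add (Finset.le_sup' _ hp1) (Finset.le_sup' _ hp2)

theorem stmt7 (n : ℕ) (f g : (Fin n → ℝ) → ℝ)
    (hf : IsTropRat n f) (hg : IsTropRat n g) :
    ∃ (k : ℕ) (P : Fin k → Set (Fin n → ℝ)),
      (∀ i, IsRatPolyhedral n (P i)) ∧ {x | f x = g x} = ⋃ i, P i := by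
  classical
  obtain ⟨f₁, f₂, ⟨A₁, hA₁, a₁, ha₁⟩, ⟨A₂, hA₂, a₂, ha₂⟩, hfeq⟩ := hf
  obtain ⟨g₁, g₂, ⟨B₁, hB₁, b₁, hb₁⟩, ⟨B₂, hB₂, b₂, hb₂⟩, hgeq⟩ := hg
  obtain ⟨k, P, hP, hset⟩ := main_lemma (A₁ ×ˢ B₂) (hA₁.product hB₂) (B₁ ×ˢ A₂)
    (hB₁.product hA₂) (fun p j => p.1 j + p.2 j) (fun p => a₁ p.1 + b₂ p.2)
    (fun p j => p.1 j + p.2 j) (fun p => b₁ p.1 + a₂ p.2)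
  refine ⟨k, P, hP, ?_⟩
  rw [← hset]
  ext x
  simp only [Set.mem_setOf_eq]
  rw [hfeq, hgeq, ha₁, ha₂, hb₁, hb₂, sub_eq_sub_iff_add_eq_add,
    sup'_add_sup' A₁ hA₁ B₂ hB₂, sup'_add_sup' B₁ hB₁ A₂ hA₂]
  have e1 : ((A₁ ×ˢ B₂).sup' (hA₁.product hB₂) fun p =>
      (a₁ p.1 + ∑ j, (p.1 j : ℝ) * x j) + (b₂ p.2 + ∑ j, (p.2 j : ℝ) * x j))
      = ((A₁ ×ˢ B₂).sup' (hA₁.product hB₂) fun p =>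
      (a₁ p.1 + b₂ p.2) + ∑ j, ((p.1 j + p.2 j : ℕ) : ℝ) * x j) := by
    apply Finset.sup'_congr _ rfl
    intro p _
    push_cast [add_mul]
    rw [Finset.sum_add_distrib]
    ring
  have e2 : ((B₁ ×ˢ A₂).sup' (hB₁.product hA₂) fun p =>
      (b₁ p.1 + ∑ j, (p.1 j : ℝ) * x j) + (a₂ p.2 + ∑ j, (p.2 j : ℝ) * x j))
      = ((B₁ ×ˢ A₂).sup' (hB₁.product hA₂) fun p =>
      (b₁ p.1 + a₂ p.2) + ∑ j, ((p.1 j + p.2 j : ℕ) : ℝ) * x j) := by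
    apply Finset.sup'_congr _ rfl
    intro p _
    push_cast [add_mul]
    rw [Finset.sum_add_distrib]
    ring
  rw [e1, e2]
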